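/- arXiv:2105.12216 — 3 statements merged into one kernel-verified Lean document; each statement's English description precedes it below -/
import Mathlib

section
/- Let s_1, …, s_l : X → ℝ be functions on a set X, let p_1, …, p_{l-1} ∈ X, and define V(x) = max_{σ ∈ S_l} [ s_{σ(1)}(x) + Σ_{i=2}^{l} s_{σ(i)}(p_{i-1}) ]. Then for each k ∈ {1, …, l-1}, the maximum in V(p_k) is attained by at least two distinct indices i = σ(1); i.e., there exist i ≠ j such that s_i(p_k) + c_i = s_j(p_k) + c_j = V(p_k), where c_i = max_{σ ∈ S_l, σ(1)=i} Σ_{m=2}^{l} s_{σ(m)}(p_{m-1}). -/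
open Finset

/-- For sections `s_1, …, s_l` and points `p_1, …, p_{l-1}` (here `l = n + 1`),
the coefficient `c_i = max_{σ ∈ S_l, σ(1) = i} Σ_{m=2}^{l} s_{σ(m)}(p_{m-1})`,
computed in `T = ℝ ∪ {-∞}`. -/
noncomputable def vandermondeCoeff {X : Type*} (n : ℕ) (s : Fin (n + 1) → X → ℝ)
    (p : Fin n → X) (i : Fin (n + 1)) : WithBot ℝ :=
  (Finset.univ.filter fun σ : Equiv.Perm (Fin (n + 1)) => σ 0 = i).sup
    fun σ => ((∑ m : Fin n, s (σ m.succ) (p m) : ℝ) : WithBot ℝ)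

/-- The tropical Vandermonde section
`V(x) = max_{σ ∈ S_l} [s_{σ(1)}(x) + Σ_{i=2}^{l} s_{σ(i)}(p_{i-1})]
      = max_i (s_i(x) + c_i)`. -/
noncomputable def vandermonde {X : Type*} (n : ℕ) (s : Fin (n + 1) → X → ℝ)
    (p : Fin n → X) (x : X) : WithBot ℝ :=
  Finset.univ.sup fun i : Fin (n + 1) =>
    ((s i x : ℝ) : WithBot ℝ) + vandermondeCoeff n s p i

/-- At each of the points `p_1, …, p_{l-1}`, the maximum defining the tropical
Vandermonde `V` is attained by at least two distinct indices: there exist `i ≠ j`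
with `s_i(p_k) + c_i = s_j(p_k) + c_j = V(p_k)`. -/
theorem vandermonde_max_attained_twice {X : Type*} (n : ℕ) (s : Fin (n + 1) → X → ℝ)
    (p : Fin n → X) (k : Fin n) :
    ∃ i j : Fin (n + 1), i ≠ j ∧
      ((s i (p k) : ℝ) : WithBot ℝ) + vandermondeCoeff n s p i = vandermonde n s p (p k) ∧
      ((s j (p k) : ℝ) : WithBot ℝ) + vandermondeCoeff n s p j = vandermonde n s p (p k) := by
  classical
  obtain ⟨σ, -, hσ⟩ := Finset.exists_max_image Finset.univ
    (fun σ : Equiv.Perm (Fin (n + 1)) => s (σ 0) (p k) + ∑ m : Fin n, s (σ m.succ) (p m))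
    ⟨1, Finset.mem_univ 1⟩
  replace hσ : ∀ ρ : Equiv.Perm (Fin (n + 1)),
      s (ρ 0) (p k) + ∑ m : Fin n, s (ρ m.succ) (p m) ≤
        s (σ 0) (p k) + ∑ m : Fin n, s (σ m.succ) (p m) :=
    fun ρ => hσ ρ (Finset.mem_univ ρ)
  set S : ℝ := s (σ 0) (p k) + ∑ m : Fin n, s (σ m.succ) (p m) with hS
  set τ : Equiv.Perm (Fin (n + 1)) := σ * Equiv.swap 0 k.succ with hτ
  have hk0 : (0 : Fin (n + 1)) ≠ k.succ := (Fin.succ_ne_zero k).symm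
  have hτ0 : τ 0 = σ k.succ := by
    simp [hτ, Equiv.Perm.mul_apply, Equiv.swap_apply_left]
  have hτk : τ k.succ = σ 0 := by
    simp [hτ, Equiv.Perm.mul_apply, Equiv.swap_apply_right]
  have hτm : ∀ m : Fin n, m ≠ k → τ m.succ = σ m.succ := by
    intro m hm
    have h1 : (m.succ : Fin (n + 1)) ≠ 0 := Fin.succ_ne_zero m
    have h2 : (m.succ : Fin (n + 1)) ≠ k.succ := fun h => hm (Fin.succ_injective _ h)
    simp [hτ, Equiv.Perm.mul_apply, Equiv.swap_apply_of_ne_of_ne h1 h2]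
  have hsum : ∀ ρ : Equiv.Perm (Fin (n + 1)),
      (∑ m : Fin n, s (ρ m.succ) (p m)) =
        s (ρ k.succ) (p k) + ∑ m ∈ Finset.univ.erase k, s (ρ m.succ) (p m) := by
    intro ρ
    rw [← Finset.add_sum_erase _ _ (Finset.mem_univ k)]
  have herase : (∑ m ∈ Finset.univ.erase k, s (τ m.succ) (p m)) =
      ∑ m ∈ Finset.univ.erase k, s (σ m.succ) (p m) :=
    Finset.sum_congr rfl fun m hm => by rw [hτm m (Finset.ne_of_mem_erase hm)]
  have hFτ : s (σ k.succ) (p k) + ∑ m : Fin n, s (τ m.succ) (p m) = S := by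
    rw [hS, hsum τ, hsum σ, hτk, herase]; ring
  -- the upper bound : V(p k) ≤ S
  have hup : vandermonde n s p (p k) ≤ ((S : ℝ) : WithBot ℝ) := by
    unfold vandermonde
    apply Finset.sup_le
    intro i _
    have hci : vandermondeCoeff n s p i ≤ ((S - s i (p k) : ℝ) : WithBot ℝ) := by
      unfold vandermondeCoeff
      apply Finset.sup_le
      intro ρ hρ
      have hρ0 : ρ 0 = i := (Finset.mem_filter.mp hρ).2
      have hle := hσ ρ
      rw [hρ0] at hle
      exact_mod_cast by linarith
    calc ((s i (p k) : ℝ) : WithBot ℝ) + vandermondeCoeff n s p i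
        ≤ ((s i (p k) : ℝ) : WithBot ℝ) + ((S - s i (p k) : ℝ) : WithBot ℝ) :=
          add_le_add_right hci _
      _ = ((S : ℝ) : WithBot ℝ) := by
          rw [← WithBot.coe_add]
          norm_num
  refine ⟨σ 0, σ k.succ, fun h => hk0 (σ.injective h), ?_, ?_⟩
  · have hmem : σ ∈ Finset.univ.filter fun ρ : Equiv.Perm (Fin (n + 1)) => ρ 0 = σ 0 := by
      simp
    have hc : ((∑ m : Fin n, s (σ m.succ) (p m) : ℝ) : WithBot ℝ) ≤
        vandermondeCoeff n s p (σ 0) := by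
      unfold vandermondeCoeff
      exact Finset.le_sup
        (f := fun ρ : Equiv.Perm (Fin (n + 1)) =>
          ((∑ m : Fin n, s (ρ m.succ) (p m) : ℝ) : WithBot ℝ)) hmem
    have hlow : ((S : ℝ) : WithBot ℝ) ≤
        ((s (σ 0) (p k) : ℝ) : WithBot ℝ) + vandermondeCoeff n s p (σ 0) := by
      calc ((S : ℝ) : WithBot ℝ)
          = ((s (σ 0) (p k) : ℝ) : WithBot ℝ) +
            ((∑ m : Fin n, s (σ m.succ) (p m) : ℝ) : WithBot ℝ) := by
            rw [← WithBot.coe_add, hS]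
        _ ≤ _ := add_le_add_right hc _
    have hVle : ((s (σ 0) (p k) : ℝ) : WithBot ℝ) + vandermondeCoeff n s p (σ 0) ≤
        vandermonde n s p (p k) := by
      unfold vandermonde
      exact Finset.le_sup
        (f := fun i : Fin (n + 1) =>
          ((s i (p k) : ℝ) : WithBot ℝ) + vandermondeCoeff n s p i) (Finset.mem_univ (σ 0))
    exact le_antisymm hVle (hup.trans hlow)
  · have hmem : τ ∈ Finset.univ.filter fun ρ : Equiv.Perm (Fin (n + 1)) => ρ 0 = σ k.succ := by
      simp [hτ0]
    have hc : ((∑ m : Fin n, s (τ m.succ) (p m) : ℝ) : WithBot ℝ) ≤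
        vandermondeCoeff n s p (σ k.succ) := by
      unfold vandermondeCoeff
      exact Finset.le_sup
        (f := fun ρ : Equiv.Perm (Fin (n + 1)) =>
          ((∑ m : Fin n, s (ρ m.succ) (p m) : ℝ) : WithBot ℝ)) hmem
    have hlow : ((S : ℝ) : WithBot ℝ) ≤
        ((s (σ k.succ) (p k) : ℝ) : WithBot ℝ) + vandermondeCoeff n s p (σ k.succ) := by
      calc ((S : ℝ) : WithBot ℝ)
          = ((s (σ k.succ) (p k) : ℝ) : WithBot ℝ) +
            ((∑ m : Fin n, s (τ m.succ) (p m) : ℝ) : WithBot ℝ) := by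
            rw [← WithBot.coe_add, hFτ]
        _ ≤ _ := add_le_add_right hc _
    have hVle : ((s (σ k.succ) (p k) : ℝ) : WithBot ℝ) + vandermondeCoeff n s p (σ k.succ) ≤
        vandermonde n s p (p k) := by
      unfold vandermonde
      exact Finset.le_sup
        (f := fun i : Fin (n + 1) =>
          ((s i (p k) : ℝ) : WithBot ℝ) + vandermondeCoeff n s p i) (Finset.mem_univ (σ k.succ))
    exact le_antisymm hVle (hup.trans hlow)
end

section
/- Let σ ⊂ ℝ^n be a cone generated by a subset of a ℤ-basis of ℤ^n (a smooth rational cone). Then its dual cone σ^∨ = { a ∈ (ℝ^n)^* : a(x) ≥ 0 for all x ∈ σ } is also a rational polyhedral cone, and the semigroup S_σ = σ^∨ ∩ ℤ^n is finitely generated. -/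
open Finset

/-- Let `σ ⊂ ℝ^n` be the cone generated by the first `k` vectors of a `ℤ`-basis of
`ℤ^n` (a smooth rational cone). Then its dual cone
`σ^∨ = {a : a(x) ≥ 0 for all x ∈ σ}` (with the dual space identified with `ℝ^n`
via the standard pairing) is again a rational polyhedral cone, i.e. a finite
intersection of half-spaces with integral normals, and the semigroup
`S_σ = σ^∨ ∩ ℤ^n` is finitely generated (Gordan's lemma in the smooth case). -/
theorem smooth_cone_dual_rational_and_semigroup_fg
    (n k : ℕ) (hk : k ≤ n) (b : Module.Basis (Fin n) ℤ (Fin n → ℤ))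
    (σ : Set (Fin n → ℝ))
    (hσ : σ = {x | ∃ c : Fin k → ℝ, (∀ i, 0 ≤ c i) ∧
      x = ∑ i : Fin k, c i • fun j => ((b (Fin.castLE hk i)) j : ℝ)})
    (σv : Set (Fin n → ℝ))
    (hσv : σv = {a | ∀ x ∈ σ, 0 ≤ ∑ j, a j * x j}) :
    (∃ (m : ℕ) (d : Fin m → Fin n → ℤ),
        σv = {a | ∀ i : Fin m, 0 ≤ ∑ j, (d i j : ℝ) * a j}) ∧
    (∃ G : Finset (Fin n → ℤ),
        (∀ g ∈ G, (fun j => ((g j : ℤ) : ℝ)) ∈ σv) ∧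
        ∀ s : Fin n → ℤ, (fun j => ((s j : ℤ) : ℝ)) ∈ σv ↔
          s ∈ AddSubmonoid.closure (G : Set (Fin n → ℤ))) := by
  classical
  -- the basis vectors lie in σ
  have hb_mem : ∀ i : Fin k, (fun j => ((b (Fin.castLE hk i)) j : ℝ)) ∈ σ := by
    intro i
    rw [hσ]
    refine ⟨Pi.single i 1, fun i' => by
      by_cases h : i' = i <;> simp [Pi.single_apply, h], ?_⟩
    rw [Finset.sum_eq_single i]
    · simp
    · intro i' _ h; simp [Pi.single_apply, h]
    · simp
  -- characterization of σv by finitely many inequalities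
  have hσv' : ∀ a : Fin n → ℝ,
      a ∈ σv ↔ ∀ i : Fin k, 0 ≤ ∑ j, a j * ((b (Fin.castLE hk i)) j : ℝ) := by
    intro a
    rw [hσv]
    constructor
    · intro ha i
      exact ha _ (hb_mem i)
    · intro h x hx
      rw [hσ] at hx
      obtain ⟨c, hc, rfl⟩ := hx
      have hpt : ∀ j, (∑ i : Fin k, c i • fun j => ((b (Fin.castLE hk i)) j : ℝ)) j
          = ∑ i : Fin k, c i * ((b (Fin.castLE hk i)) j : ℝ) := by
        intro j; simp [Finset.sum_apply]
      simp only [hpt]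
      have key : ∑ x : Fin n, a x * ∑ i : Fin k, c i * ((b (Fin.castLE hk i)) x : ℝ)
          = ∑ i : Fin k, c i * ∑ x : Fin n, a x * ((b (Fin.castLE hk i)) x : ℝ) := by
        simp only [Finset.mul_sum]
        rw [Finset.sum_comm]
        congr 1; funext i; congr 1; funext x; ring
      rw [key]
      exact Finset.sum_nonneg fun i _ => mul_nonneg (hc i) (h i)
  refine ⟨⟨k, fun i => b (Fin.castLE hk i), ?_⟩, ?_⟩
  · ext a
    simp only [Set.mem_setOf_eq, hσv' a]
    constructor
    · intro h i; simpa [mul_comm] using h i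
    · intro h i; simpa [mul_comm] using h i
  -- Finite generation.  Set up the inverse matrix / dual basis.
  set M : Matrix (Fin n) (Fin n) ℤ := (Pi.basisFun ℤ (Fin n)).toMatrix b with hMdef
  have hM : ∀ i j, M j i = b i j := by
    intro i j; simp [hMdef, Module.Basis.toMatrix_apply]
  letI : Invertible M := (Pi.basisFun ℤ (Fin n)).invertibleToMatrix b
  set N : Matrix (Fin n) (Fin n) ℤ := ⅟M with hNdef
  have hMN : M * N = 1 := mul_invOf_self M
  have hNM : N * M = 1 := invOf_mul_self M
  set e : Fin n → (Fin n → ℤ) := fun i j => N i j with hedef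
  -- pairing of dual vectors with basis vectors
  have pair : ∀ i l : Fin n, (∑ j, e i j * b l j) = if i = l then 1 else 0 := by
    intro i l
    have h1 : (∑ j, e i j * b l j) = (N * M) i l := by
      rw [Matrix.mul_apply]
      exact Finset.sum_congr rfl fun j _ => by rw [hM l j]
    rw [h1, hNM, Matrix.one_apply]
  -- coordinates
  set c : (Fin n → ℤ) → Fin n → ℤ := fun s i => ∑ j, b i j * s j with hcdef
  have decomp : ∀ s : Fin n → ℤ, s = ∑ i : Fin n, c s i • e i := by
    intro s
    funext l
    have h1 : (∑ i : Fin n, c s i • e i) l = ∑ i : Fin n, c s i * e i l := by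
      simp [Finset.sum_apply]
    rw [h1]
    have h2 : ∀ i, c s i * e i l = ∑ j, (s j * (M j i * N i l)) := by
      intro i
      simp only [hcdef]
      simp only [Finset.sum_mul]
      exact Finset.sum_congr rfl fun j _ => by rw [hM i j]; ring
    simp only [h2]
    rw [Finset.sum_comm]
    have h3 : ∀ j, (∑ i, s j * (M j i * N i l)) = s j * (M * N) j l := by
      intro j; rw [Matrix.mul_apply, Finset.mul_sum]
    simp only [h3, hMN, Matrix.one_apply]
    simp
  -- integral membership criterion
  have int_mem : ∀ s : Fin n → ℤ,
      (fun j => ((s j : ℤ) : ℝ)) ∈ σv ↔ ∀ i : Fin k, 0 ≤ c s (Fin.castLE hk i) := by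
    intro s
    rw [hσv']
    have hcast : ∀ i : Fin k, (∑ j, ((s j : ℤ) : ℝ) * ((b (Fin.castLE hk i)) j : ℝ))
        = ((c s (Fin.castLE hk i) : ℤ) : ℝ) := by
      intro i
      simp only [hcdef]
      push_cast
      exact Finset.sum_congr rfl fun j _ => by ring
    constructor
    · intro h i
      have := h i
      rw [hcast i] at this
      exact_mod_cast this
    · intro h i
      rw [hcast i]
      exact_mod_cast h i
  -- coordinates of the generators
  have he_c : ∀ (i : Fin n) (l : Fin k),
      c (e i) (Fin.castLE hk l) = if i = Fin.castLE hk l then 1 else 0 := by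
    intro i l
    have h1 : c (e i) (Fin.castLE hk l) = ∑ j, e i j * b (Fin.castLE hk l) j := by
      simp only [hcdef]
      exact Finset.sum_congr rfl fun j _ => mul_comm _ _
    rw [h1, pair]
  have hne_c : ∀ (i : Fin n) (l : Fin k),
      c (-e i) (Fin.castLE hk l) = - c (e i) (Fin.castLE hk l) := by
    intro i l
    simp only [hcdef, Pi.neg_apply, mul_neg]
    exact Finset.sum_neg_distrib _
  -- the generating set
  set G : Finset (Fin n → ℤ) :=
    (Finset.univ.image e) ∪
      ((Finset.univ.filter (fun i : Fin n => k ≤ (i : ℕ))).image (fun i => -e i)) with hGdef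
  have hGcoord : ∀ g ∈ G, ∀ l : Fin k, 0 ≤ c g (Fin.castLE hk l) := by
    intro g hg l
    rw [hGdef] at hg
    simp only [Finset.mem_union, Finset.mem_image, Finset.mem_filter, Finset.mem_univ,
      true_and] at hg
    rcases hg with ⟨i, _, rfl⟩ | ⟨i, hi, rfl⟩
    · rw [he_c i l]; split <;> norm_num
    · rw [hne_c i l, he_c i l]
      have : i ≠ Fin.castLE hk l := by
        intro h
        have : (i : ℕ) = (l : ℕ) := by rw [h]; simp
        omega
      simp [this]
  -- splitting an integer multiple into natural multiples
  have zsplit : ∀ (z : ℤ) (v : Fin n → ℤ), z • v = z.toNat • v + (-z).toNat • (-v) := by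
    intro z v
    have hz : ((z.toNat : ℤ) - ((-z).toNat : ℤ)) = z := by omega
    calc z • v = ((z.toNat : ℤ) - ((-z).toNat : ℤ)) • v := by rw [hz]
      _ = (z.toNat : ℤ) • v - ((-z).toNat : ℤ) • v := sub_smul _ _ _
      _ = z.toNat • v + (-z).toNat • (-v) := by
          rw [natCast_zsmul, natCast_zsmul, smul_neg, sub_eq_add_neg]
  refine ⟨G, ?_, ?_⟩
  · intro g hg
    rw [int_mem]
    exact hGcoord g hg
  · intro s
    rw [int_mem]
    constructor
    · intro h
      rw [decomp s]
      refine AddSubmonoid.sum_mem _ ?_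
      intro i _
      have heG : e i ∈ AddSubmonoid.closure (G : Set (Fin n → ℤ)) := by
        apply AddSubmonoid.subset_closure
        rw [Finset.mem_coe, hGdef]
        simp [Finset.mem_union]
      by_cases hik : (i : ℕ) < k
      · have hi : Fin.castLE hk ⟨(i : ℕ), hik⟩ = i := by
          apply Fin.ext; simp
        have hnn : 0 ≤ c s i := by
          have := h ⟨(i : ℕ), hik⟩
          rwa [hi] at this
        have h0 : (-(c s i)).toNat = 0 := by omega
        rw [zsplit (c s i) (e i), h0, zero_nsmul, add_zero]
        exact nsmul_mem heG _
      · have hneG : -e i ∈ AddSubmonoid.closure (G : Set (Fin n → ℤ)) := by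
          apply AddSubmonoid.subset_closure
          rw [Finset.mem_coe, hGdef]
          simp only [Finset.mem_union, Finset.mem_image, Finset.mem_filter, Finset.mem_univ,
            true_and]
          right; exact ⟨i, by omega, rfl⟩
        rw [zsplit (c s i) (e i)]
        exact AddSubmonoid.add_mem _ (nsmul_mem heG _) (nsmul_mem hneG _)
    · intro hs
      have hmono : AddSubmonoid.closure (G : Set (Fin n → ℤ)) ≤
          { carrier := {s | ∀ i : Fin k, 0 ≤ c s (Fin.castLE hk i)}
            zero_mem' := by intro i; simp [hcdef]
            add_mem' := by
              intro x y hx hy i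
              have hadd : c (x + y) (Fin.castLE hk i)
                  = c x (Fin.castLE hk i) + c y (Fin.castLE hk i) := by
                simp [hcdef, mul_add, Finset.sum_add_distrib]
              rw [hadd]
              exact add_nonneg (hx i) (hy i) } := by
        apply AddSubmonoid.closure_le.mpr
        intro g hg
        exact hGcoord g (Finset.mem_coe.mp hg)
      exact hmono hs
end

section
/- In a tropical module M (a semimodule over T = ℝ ∪ {-∞} with idempotent addition), if M is generated by a finite set, then every extremal element of M (an element m such that m = a ⊕ b with a,b ∈ M implies a = m or b = m) must appear, up to tropical scalar multiplication, in every generating set of M. -/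
/-- A tropical module: a commutative idempotent monoid `(M, ⊕, -∞)` with a scalar
action of the tropical semifield `T = ℝ ∪ {-∞}` (modeled as `WithBot ℝ`, whose
tropical sum is `max` and tropical product is `+`) satisfying distributivity,
associativity, unitality and the cancellation axiom. -/
structure TropModule (M : Type*) where
  add : M → M → M
  zero : M
  smul : WithBot ℝ → M → M
  add_comm : ∀ a b, add a b = add b a
  add_assoc : ∀ a b c, add (add a b) c = add a (add b c)
  zero_add : ∀ a, add zero a = a
  add_idem : ∀ a, add a a = a
  smul_add : ∀ (t : WithBot ℝ) (a b : M), smul t (add a b) = add (smul t a) (smul t b)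
  add_smul : ∀ (s t : WithBot ℝ) (a : M), smul (max s t) a = add (smul s a) (smul t a)
  mul_smul : ∀ (s t : WithBot ℝ) (a : M), smul s (smul t a) = smul (s + t) a
  one_smul : ∀ a, smul ((0 : ℝ) : WithBot ℝ) a = a
  bot_smul : ∀ a, smul ⊥ a = zero
  smul_zero : ∀ t : WithBot ℝ, smul t zero = zero
  cancel : ∀ (s t : WithBot ℝ) (v : M), smul s v = smul t v → s = t ∨ v = zero

/-- A subset `S` generates the tropical module `M` if every element of `M` is a
finite tropical linear combination `⊕ᵢ tᵢ ⊙ sᵢ` of elements of `S`. -/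
def TropModule.Generates {M : Type*} (T : TropModule M) (S : Set M) : Prop :=
  ∀ m : M, ∃ l : List (WithBot ℝ × M), (∀ p ∈ l, p.2 ∈ S) ∧
    m = (l.map fun p => T.smul p.1 p.2).foldr T.add T.zero

/-- An element `m` of a tropical module is extremal if `m = a ⊕ b` forces
`a = m` or `b = m`. -/
def TropModule.Extremal {M : Type*} (T : TropModule M) (m : M) : Prop :=
  ∀ a b, T.add a b = m → a = m ∨ b = m

/-- In a finitely generated tropical module, every (nonzero) extremal element
appears, up to tropical scalar multiplication by a real number, in every
generating set. -/
theorem extremal_mem_every_generating_set {M : Type*} (T : TropModule M)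
    (hfin : ∃ G : Finset M, T.Generates (G : Set M))
    (m : M) (hm : T.Extremal m) (hm0 : m ≠ T.zero)
    (S : Set M) (hS : T.Generates S) :
    ∃ s ∈ S, ∃ t : ℝ, m = T.smul ((t : ℝ) : WithBot ℝ) s := by
  obtain ⟨l, hl, hm_eq⟩ := hS m
  clear hfin
  induction l with
  | nil => simp only [List.map_nil, List.foldr_nil] at hm_eq; exact absurd hm_eq hm0
  | cons p l ih =>
    simp only [List.map_cons, List.foldr_cons] at hm_eq
    rcases hm _ _ hm_eq.symm with h | h
    · cases hp1 : p.1 with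
      | bot =>
        rw [hp1] at h
        exact absurd ((T.bot_smul p.2).symm.trans h).symm hm0
      | coe r =>
        exact ⟨p.2, hl p (List.mem_cons_self), r, by rw [← h, hp1]⟩
    · exact ih (fun q hq => hl q (List.mem_cons_of_mem _ hq)) h.symm
end
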